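/- A rectangular diagram of a surface Π can be uniquely recovered from the union of its rectangles: Π is exactly the set of maximal rectangles (with respect to inclusion) contained in ∪_{r∈Π} r. -/

import Mathlib

noncomputable section

/-- The circle `S¹ = ℝ/ℤ`. -/
abbrev S1 := AddCircle (1 : ℝ)

namespace RectDiag

instance : Fact ((0:ℝ) < 1) := ⟨one_pos⟩

/-- The length of the (positively oriented) arc from `x` to `y`, normalized in `[0,1)`. -/
def arcLen (x y : S1) : ℝ := (AddCircle.equivIco 1 0 (y - x) : ℝ)

/-- The closed arc `[x;y]` from `x` to `y` with respect to the standard orientation. -/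
def closedArc (x y : S1) : Set S1 :=
  {z | ∃ t : ℝ, 0 ≤ t ∧ t ≤ arcLen x y ∧ z = x + (t : S1)}

/-- The open arc `(x;y)`. -/
def openArc (x y : S1) : Set S1 :=
  {z | ∃ t : ℝ, 0 < t ∧ t < arcLen x y ∧ z = x + (t : S1)}

/-- The half-open arc `(x;y]`. -/
def arcIoc (x y : S1) : Set S1 :=
  {z | ∃ t : ℝ, 0 < t ∧ t ≤ arcLen x y ∧ z = x + (t : S1)}

/-- A rectangle `[θ1;θ2] × [φ1;φ2]` in the torus `T² = S¹ × S¹`. -/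
structure Rect where
  θ1 : S1
  θ2 : S1
  φ1 : S1
  φ2 : S1
  hθ : θ1 ≠ θ2
  hφ : φ1 ≠ φ2

/-- The underlying subset of the torus. -/
def Rect.toSet (r : Rect) : Set (S1 × S1) := closedArc r.θ1 r.θ2 ×ˢ closedArc r.φ1 r.φ2

/-- The vertex set `V(r) = {θ1,θ2} × {φ1,φ2}`. -/
def Rect.V (r : Rect) : Set (S1 × S1) := ({r.θ1, r.θ2} : Set S1) ×ˢ ({r.φ1, r.φ2} : Set S1)

/-- Two rectangles are compatible if their intersection is empty, or consists of
common vertices, or is a rectangle disjoint from the vertices of both. -/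
def Compatible (r1 r2 : Rect) : Prop :=
  r1.toSet ∩ r2.toSet = ∅ ∨
  (r1.toSet ∩ r2.toSet ⊆ r1.V ∧ r1.toSet ∩ r2.toSet ⊆ r2.V) ∨
  (∃ r : Rect, r1.toSet ∩ r2.toSet = r.toSet ∧ Disjoint r.toSet (r1.V ∪ r2.V))

/-- `v` is a free vertex of the collection `Rs` of rectangles:
it is a vertex of exactly one rectangle of `Rs`. -/
def FreeVertexOf (Rs : Set Rect) (v : S1 × S1) : Prop := ∃! r, r ∈ Rs ∧ v ∈ r.V

/-- A rectangular diagram of a surface. -/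
structure RectDiagram where
  rects : Set Rect
  finite : rects.Finite
  compat : ∀ r1 ∈ rects, ∀ r2 ∈ rects, r1 ≠ r2 → Compatible r1 r2
  free_meridian : ∀ θ : S1, ∃ a b : S1 × S1,
    {v | FreeVertexOf rects v ∧ v.1 = θ} ⊆ {a, b}
  free_longitude : ∀ φ : S1, ∃ a b : S1 × S1,
    {v | FreeVertexOf rects v ∧ v.2 = φ} ⊆ {a, b}

/-- The boundary `∂Π`: the set of free vertices. -/
def RectDiagram.boundary (P : RectDiagram) : Set (S1 × S1) := {v | FreeVertexOf P.rects v}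

/-- The set of all vertices of the diagram. -/
def RectDiagram.vertexSet (P : RectDiagram) : Set (S1 × S1) := ⋃ r ∈ P.rects, r.V

/-- The meridian `m_θ` is an occupied level of `P`. -/
def OccupiedMeridian (P : RectDiagram) (θ : S1) : Prop := ∃ v ∈ P.vertexSet, v.1 = θ

/-- Two chords of `S¹` do not cross. -/
def ChordsNoncross (c c' : Set S1) : Prop :=
  ∀ a b : S1, c = {a, b} → c' ⊆ openArc a b ∨ c' ⊆ openArc b a

/-- A non-crossing chord diagram: a finite set of chords (unordered pairs of distinct
points of `S¹`) that pairwise do not cross. -/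
def IsNCD (C : Set (Set S1)) : Prop :=
  C.Finite ∧ (∀ c ∈ C, ∃ a b : S1, a ≠ b ∧ c = {a, b}) ∧
  ∀ c ∈ C, ∀ c' ∈ C, c ≠ c' → ChordsNoncross c c'

/-- Any chord between two points of `R` can be added to `C` keeping it non-crossing. -/
def Extendable (C : Set (Set S1)) (R : Set S1) : Prop :=
  ∀ a ∈ R, ∀ b ∈ R, a ≠ b → IsNCD (insert ({a, b} : Set S1) C)

/-- A region of a non-crossing chord diagram `C`: a maximal subset `R ⊆ S¹` such that
any chord joining two distinct points of `R` can be added to `C` keeping it non-crossing. -/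
def IsRegion (C : Set (Set S1)) (R : Set S1) : Prop :=
  Extendable C R ∧ ∀ R', Extendable C R' → R ⊆ R' → R' = R

/-- Two regions are neighboring: distinct, their boundaries share exactly two points,
and these two points form a chord of `C`. -/
def Neighboring (C : Set (Set S1)) (R R' : Set S1) : Prop :=
  IsRegion C R ∧ IsRegion C R' ∧ R ≠ R' ∧
  ∃ a b : S1, a ≠ b ∧ frontier R ∩ frontier R' = {a, b} ∧ ({a, b} : Set S1) ∈ C

/-- The points `φ 0, …, φ (k-1)` follow on `S¹` in this circular order. -/
def CircOrd (k : ℕ) (φ : ℕ → S1) : Prop :=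
  ∃ t : ℕ → ℝ, (∀ i j : ℕ, i < j → j < k → t i < t j) ∧
    (∀ i : ℕ, i < k → t i < t 0 + 1) ∧
    ∀ i : ℕ, i < k → φ i = ((t i : ℝ) : S1)

/-- The chords `{φ1,φ2},{φ3,φ4},…,{φ_{k-1},φ_k}` (for `k` even; `0`-based indices). -/
def pairsRemovedEven (k : ℕ) (φ : ℕ → S1) : Set (Set S1) :=
  {c | ∃ i : ℕ, 2*i+1 < k ∧ c = ({φ (2*i), φ (2*i+1)} : Set S1)}

/-- The chords `{φ1,φ2},{φ3,φ4},…,{φ_{k-2},φ_{k-1}}` (for `k` odd). -/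
def pairsRemovedOdd (k : ℕ) (φ : ℕ → S1) : Set (Set S1) :=
  {c | ∃ i : ℕ, 2*i+2 < k ∧ c = ({φ (2*i), φ (2*i+1)} : Set S1)}

/-- The chords `{φ2,φ3},{φ4,φ5},…` added by an event. -/
def pairsAdded (k : ℕ) (φ : ℕ → S1) : Set (Set S1) :=
  {c | ∃ i : ℕ, 2*i+2 < k ∧ c = ({φ (2*i+1), φ (2*i+2)} : Set S1)}

/-- The wrap-around chord `{φ_k, φ1}`. -/
def wrapChord (k : ℕ) (φ : ℕ → S1) : Set S1 := {φ (k-1), φ 0}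

/-- The admissible event (in the forward direction) determined by the circularly
ordered points `φ 0, …, φ (k-1)`, of one of the three types. -/
def EventFwd (k : ℕ) (φ : ℕ → S1) (C1 C2 : Set (Set S1)) : Prop :=
  2 ≤ k ∧ CircOrd k φ ∧
  ((Even k ∧ pairsRemovedEven k φ ⊆ C1 ∧
      C2 = (C1 \ pairsRemovedEven k φ) ∪ pairsAdded k φ) ∨
   (Odd k ∧ pairsRemovedOdd k φ ⊆ C1 ∧
      C2 = (C1 \ pairsRemovedOdd k φ) ∪ pairsAdded k φ) ∨
   (Even k ∧ 4 ≤ k ∧ pairsRemovedEven k φ ⊆ C1 ∧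
      C2 = (C1 \ pairsRemovedEven k φ) ∪ (pairsAdded k φ ∪ {wrapChord k φ})))

/-- `C1 ↦ C2` is an admissible event with involved points `φ 0, …, φ (k-1)`
(one of the diagrams, whichever of the two, is obtained from the other). -/
def AdmissibleEventVia (k : ℕ) (φ : ℕ → S1) (C1 C2 : Set (Set S1)) : Prop :=
  EventFwd k φ C1 C2 ∨ EventFwd k φ C2 C1

/-- `C1 ↦ C2` is an admissible event of non-crossing chord diagrams. -/
def AdmissibleEvent (C1 C2 : Set (Set S1)) : Prop :=
  IsNCD C1 ∧ IsNCD C2 ∧ ∃ (k : ℕ) (φ : ℕ → S1), AdmissibleEventVia k φ C1 C2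

/-- The chords of the movie of `P` visible at the meridian `m_{θ0}` (for `θ0` in the
open `θ`-interval of a rectangle of `P`). -/
def movieAt (P : RectDiagram) (θ0 : S1) : Set (Set S1) :=
  {c | ∃ r ∈ P.rects, θ0 ∈ openArc r.θ1 r.θ2 ∧ c = ({r.φ1, r.φ2} : Set S1)}

/-- The movie diagram `Ψ_P` associated with `P`: the left continuous extension of
`movieAt`. -/
def moviePsi (P : RectDiagram) (θ0 : S1) : Set (Set S1) :=
  {c | ∃ ε > (0:ℝ), ∀ t : ℝ, 0 < t → t < ε → c ∈ movieAt P (θ0 - (t : S1))}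

/-- The right limit `Ψ_P(θ0+0)`. -/
def moviePsiRight (P : RectDiagram) (θ0 : S1) : Set (Set S1) :=
  {c | ∃ ε > (0:ℝ), ∀ t : ℝ, 0 < t → t < ε → c ∈ movieAt P (θ0 + (t : S1))}

/-- A vertical bubble creation move `P ↦ P'` replacing `r = [θ1;θ2]×[φ1;φ2] ∈ P` by
`r1 = [θ1;θ3]×[φ1;φ2]`, `r2 = [θ3;θ4]×[φ2;φ1]`, `r3 = [θ4;θ2]×[φ1;φ2]`. -/
def IsBubbleMove (P P' : RectDiagram) (r r1 r2 r3 : Rect) (θ3 θ4 : S1) : Prop :=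
  r ∈ P.rects ∧
  θ3 ∈ openArc r.θ1 r.θ2 ∧ θ4 ∈ openArc θ3 r.θ2 ∧
  (∀ θ ∈ closedArc θ3 θ4, ¬ OccupiedMeridian P θ) ∧
  (∀ r' ∈ P.rects, ¬ (closedArc θ3 θ4 ×ˢ closedArc r.φ1 r.φ2 ⊆ interior r'.toSet)) ∧
  (r1.θ1 = r.θ1 ∧ r1.θ2 = θ3 ∧ r1.φ1 = r.φ1 ∧ r1.φ2 = r.φ2) ∧
  (r2.θ1 = θ3 ∧ r2.θ2 = θ4 ∧ r2.φ1 = r.φ2 ∧ r2.φ2 = r.φ1) ∧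
  (r3.θ1 = θ4 ∧ r3.θ2 = r.θ2 ∧ r3.φ1 = r.φ1 ∧ r3.φ2 = r.φ2) ∧
  P'.rects = (P.rects \ {r}) ∪ {r1, r2, r3}


def rep (z : S1) : ℝ := (AddCircle.equivIco 1 0 z : ℝ)

theorem rep_coe (t : ℝ) : rep ((t : ℝ) : S1) = Int.fract t := by
  simp [rep, AddCircle.coe_equivIco_mk_apply]

theorem coe_rep (z : S1) : ((rep z : ℝ) : S1) = z := by
  have := (AddCircle.equivIco 1 0).symm_apply_apply z
  rwa [AddCircle.equivIco, QuotientAddGroup.equivIcoMod_symm_apply] at this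

theorem rep_mem (z : S1) : rep z ∈ Set.Ico (0:ℝ) 1 := by
  have := (AddCircle.equivIco 1 0 z).2
  simpa [rep] using this

theorem rep_coe_of_mem {t : ℝ} (h : t ∈ Set.Ico (0:ℝ) 1) : rep ((t:ℝ) : S1) = t := by
  rw [rep_coe]; exact Int.fract_eq_self.2 h

theorem rep_zero : rep (0 : S1) = 0 := by
  have : ((0:ℝ) : S1) = 0 := by norm_cast
  rw [← this, rep_coe_of_mem (by norm_num)]

theorem rep_eq_zero_iff {z : S1} : rep z = 0 ↔ z = 0 := by
  constructor
  · intro h; have := coe_rep z; rw [h] at this; simpa using this.symm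
  · rintro rfl; exact rep_zero

theorem arcLen_def (x y : S1) : arcLen x y = rep (y - x) := rfl

theorem arcLen_nonneg (x y : S1) : 0 ≤ arcLen x y := (rep_mem _).1
theorem arcLen_lt_one (x y : S1) : arcLen x y < 1 := (rep_mem _).2

theorem arcLen_eq_zero_iff {x y : S1} : arcLen x y = 0 ↔ x = y := by
  rw [arcLen_def, rep_eq_zero_iff, sub_eq_zero, eq_comm]

theorem arcLen_pos {x y : S1} (h : x ≠ y) : 0 < arcLen x y :=
  (arcLen_nonneg x y).lt_of_ne (fun h0 => h (arcLen_eq_zero_iff.1 h0.symm))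

theorem mem_closedArc {x y z : S1} : z ∈ closedArc x y ↔ rep (z - x) ≤ arcLen x y := by
  constructor
  · rintro ⟨t, h0, hL, rfl⟩
    rw [add_sub_cancel_left, rep_coe_of_mem ⟨h0, hL.trans_lt (arcLen_lt_one x y)⟩]
    exact hL
  · intro h
    exact ⟨rep (z - x), (rep_mem _).1, h, by rw [coe_rep, add_sub_cancel]⟩

theorem left_mem_closedArc (x y : S1) : x ∈ closedArc x y := by
  rw [mem_closedArc]; simpa [rep_zero] using arcLen_nonneg x y

theorem right_mem_closedArc (x y : S1) : y ∈ closedArc x y := by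
  rw [mem_closedArc, arcLen_def]

theorem mem_closedArc_coe {x y : S1} {t : ℝ} (h0 : 0 ≤ t) (h1 : t ≤ arcLen x y) :
    x + ((t:ℝ):S1) ∈ closedArc x y := ⟨t, h0, h1, rfl⟩

theorem closedArc_eq_image (x y : S1) :
    closedArc x y = (fun t : ℝ => x + ((t:ℝ):S1)) '' Set.Icc 0 (arcLen x y) := by
  ext z
  constructor
  · rintro ⟨t, h0, hL, rfl⟩; exact ⟨t, ⟨h0, hL⟩, rfl⟩
  · rintro ⟨t, ⟨h0, hL⟩, rfl⟩; exact ⟨t, h0, hL, rfl⟩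



theorem coe_add_S1 (a b : ℝ) : (((a+b):ℝ):S1) = (a:S1) + (b:S1) := rfl
theorem coe_sub_S1 (a b : ℝ) : (((a-b):ℝ):S1) = (a:S1) - (b:S1) := rfl
theorem coe_one_S1 : ((1:ℝ):S1) = 0 := by simpa using AddCircle.coe_period (p := (1:ℝ))
theorem coe_arcLen (x y : S1) : ((arcLen x y : ℝ) : S1) = y - x := coe_rep _

theorem isClosed_closedArc (x y : S1) : IsClosed (closedArc x y) := by
  rw [closedArc_eq_image]
  exact (isCompact_Icc.image (Continuous.add continuous_const (AddCircle.continuous_mk' 1))).isClosed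

theorem add_coe_injOn {x : S1} : Set.InjOn (fun t : ℝ => x + ((t:ℝ):S1)) (Set.Ico 0 1) := by
  intro s hs t ht h
  simp only at h
  have h2 : x + ((s:ℝ):S1) - x = x + ((t:ℝ):S1) - x := by rw [h]
  rw [add_sub_cancel_left, add_sub_cancel_left] at h2
  calc s = rep ((s:ℝ):S1) := (rep_coe_of_mem hs).symm
    _ = rep ((t:ℝ):S1) := by rw [h2]
    _ = t := rep_coe_of_mem ht

theorem infinite_closedArc {x y : S1} (h : x ≠ y) : (closedArc x y).Infinite := by
  rw [closedArc_eq_image]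
  refine (Set.Icc_infinite (arcLen_pos h)).image ?_
  have hsub : Set.Icc (0:ℝ) (arcLen x y) ⊆ Set.Ico 0 1 :=
    fun t ht => ⟨ht.1, ht.2.trans_lt (arcLen_lt_one x y)⟩
  exact add_coe_injOn.mono hsub

theorem notmem_left {x y : S1} {δ : ℝ} (h0 : 0 < δ) (h1 : δ < 1 - arcLen x y) :
    x - ((δ:ℝ):S1) ∉ closedArc x y := by
  have hL := arcLen_nonneg x y
  rw [mem_closedArc]
  have h3 : x - ((δ:ℝ):S1) - x = (((1 - δ : ℝ)):S1) := by
    rw [coe_sub_S1, coe_one_S1]; abel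
  rw [h3, rep_coe_of_mem ⟨by linarith, by linarith⟩]
  intro hc; linarith

theorem notmem_right {x y : S1} {δ : ℝ} (h0 : 0 < δ) (h1 : δ < 1 - arcLen x y) :
    y + ((δ:ℝ):S1) ∉ closedArc x y := by
  have hL := arcLen_nonneg x y
  rw [mem_closedArc]
  have h3 : y + ((δ:ℝ):S1) - x = (((arcLen x y + δ : ℝ)):S1) := by
    rw [coe_add_S1, coe_arcLen]; abel
  rw [h3, rep_coe_of_mem ⟨by linarith, by linarith⟩]
  intro hc; linarith

theorem arcLen_symm {x y : S1} (h : x ≠ y) : arcLen y x = 1 - arcLen x y := by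
  have hfr : Int.fract (arcLen x y) = arcLen x y := Int.fract_eq_self.2 (rep_mem _)
  have hne : Int.fract (arcLen x y) ≠ 0 := by
    rw [hfr]; exact (arcLen_pos h).ne'
  have h3 : x - y = ((-(arcLen x y) : ℝ) : S1) := by
    have : (((-(arcLen x y)) : ℝ) : S1) = -((arcLen x y : ℝ):S1) := rfl
    rw [this, coe_arcLen]; abel
  rw [arcLen_def, h3, rep_coe, Int.fract_neg hne, hfr]

theorem compl_arc_not_subset {x y : S1} (h : x ≠ y) : ¬ (closedArc y x ⊆ closedArc x y) := by
  intro hs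
  have hL1 : arcLen x y < 1 := arcLen_lt_one x y
  have hL0 : 0 < arcLen x y := arcLen_pos h
  have hmem : y + (((1-arcLen x y)/2 : ℝ) : S1) ∈ closedArc y x := by
    apply mem_closedArc_coe (by linarith)
    rw [arcLen_symm h]; linarith
  exact notmem_right (x := x) (y := y) (by linarith) (by linarith) (hs hmem)

theorem eq_add_coe_rep {c z : S1} : z = c + ((rep (z - c) : ℝ) : S1) := by
  rw [coe_rep, add_sub_cancel]

theorem exists_two_sided {c d z : S1} (hz : z ∈ closedArc c d) (hzc : z ≠ c) (hzd : z ≠ d) :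
    ∃ ε > 0, ∀ δ : ℝ, 0 < δ → δ < ε →
      z - ((δ:ℝ):S1) ∈ closedArc c d ∧ z + ((δ:ℝ):S1) ∈ closedArc c d := by
  set L := arcLen c d with hL
  set t := rep (z - c) with ht
  have htL : t ≤ L := mem_closedArc.1 hz
  have hzc' : z = c + ((t:ℝ):S1) := eq_add_coe_rep
  have ht0 : 0 < t := by
    rcases (rep_mem (z - c)).1.lt_or_eq with h | h
    · exact h
    · exfalso; apply hzc
      have h' : t = 0 := h.symm
      rw [hzc', h']; norm_num
  have htL' : t < L := by
    rcases htL.lt_or_eq with h | h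
    · exact h
    · exfalso; apply hzd; rw [hzc', h, hL, coe_arcLen, add_sub_cancel]
  refine ⟨min t (L - t), lt_min ht0 (by linarith), fun δ hδ0 hδ => ?_⟩
  have hδt : δ < t := hδ.trans_le (min_le_left _ _)
  have hδL : δ < L - t := hδ.trans_le (min_le_right _ _)
  constructor
  · have : z - ((δ:ℝ):S1) = c + (((t - δ : ℝ)):S1) := by
      rw [coe_sub_S1, hzc']; abel
    rw [this]; exact mem_closedArc_coe (by linarith) (by linarith)
  · have : z + ((δ:ℝ):S1) = c + (((t + δ : ℝ)):S1) := by
      rw [coe_add_S1, hzc']; abel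
    rw [this]; exact mem_closedArc_coe (by linarith) (by linarith)

theorem closedArc_inj {x y x' y' : S1} (hxy : x ≠ y) (hxy' : x' ≠ y')
    (h : closedArc x y = closedArc x' y') : x = x' ∧ y = y' := by
  have hLlt : arcLen x y < 1 := arcLen_lt_one x y
  have hLlt' : arcLen x' y' < 1 := arcLen_lt_one x' y'
  have hxx' : x = x' := by
    by_contra hne
    -- wlog-free: show rep (x' - x) = 0 is impossible unless equal; derive contradiction
    have hx'mem : x' ∈ closedArc x y := by
      rw [h]; exact left_mem_closedArc _ _
    have hxmem : x ∈ closedArc x' y' := by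
      rw [← h]; exact left_mem_closedArc _ _
    set t := rep (x' - x) with htdef
    have ht : t ≤ arcLen x y := mem_closedArc.1 hx'mem
    have ht0 : 0 < t := by
      rcases (rep_mem (x' - x)).1.lt_or_eq with h' | h'
      · exact h'
      · exfalso; apply hne
        have h2 := eq_add_coe_rep (c := x) (z := x')
        have h' : t = 0 := h'.symm
        rw [← htdef, h'] at h2
        simpa using h2.symm
    set ε := (min t (1 - arcLen x' y')) / 2 with hε
    have hm0 : 0 < min t (1 - arcLen x' y') := lt_min ht0 (by linarith)
    have hm1 := min_le_left t (1 - arcLen x' y')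
    have hm2 := min_le_right t (1 - arcLen x' y')
    have hε0 : 0 < ε := by rw [hε]; linarith
    have hεt : ε < t := by rw [hε]; linarith
    have hεL : ε < 1 - arcLen x' y' := by rw [hε]; linarith
    have hz : x + (((t - ε : ℝ)):S1) ∈ closedArc x y :=
      mem_closedArc_coe (by linarith) (by linarith)
    rw [h, mem_closedArc] at hz
    have hx'x : x - x' = (((1 - t : ℝ)):S1) := by
      have h1 : x' - x = ((t:ℝ):S1) := (coe_rep _).symm
      have h2 : x - x' = -(x' - x) := by abel
      rw [h2, h1, coe_sub_S1, coe_one_S1]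
      have : (((-t:ℝ)):S1) = -((t:ℝ):S1) := rfl
      rw [← this]
      norm_num
    have hcomp : x + (((t - ε : ℝ)):S1) - x' = (((1 - ε : ℝ)):S1) := by
      have : x + (((t - ε : ℝ)):S1) - x' = (x - x') + (((t - ε : ℝ)):S1) := by abel
      rw [this, hx'x, ← coe_add_S1]
      norm_num
    rw [hcomp, rep_coe_of_mem ⟨by linarith, by linarith⟩] at hz
    linarith
  subst hxx'
  have hyy' : arcLen x y = arcLen x y' := by
    have h1 : y ∈ closedArc x y' := by rw [← h]; exact right_mem_closedArc _ _
    have h2 : y' ∈ closedArc x y := by rw [h]; exact right_mem_closedArc _ _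
    rw [mem_closedArc] at h1 h2
    show rep (y - x) = rep (y' - x)
    exact le_antisymm h1 h2
  constructor
  · rfl
  · have h1 : y - x = ((arcLen x y : ℝ):S1) := (coe_arcLen x y).symm
    have h2 : y' - x = ((arcLen x y' : ℝ):S1) := (coe_arcLen x y').symm
    have : y - x = y' - x := by rw [h1, h2, hyy']
    have := congrArg (· + x) this
    simpa using this

theorem end_left_mem {a1 a2 x1 y1 x2 y2 : S1} (ha : a1 ≠ a2) (h1 : x1 ≠ y1) (h2 : x2 ≠ y2)
    (hS : closedArc a1 a2 = closedArc x1 y1 ∩ closedArc x2 y2) :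
    (a1 = x1 ∨ a1 = y1) ∨ (a1 = x2 ∨ a1 = y2) := by
  by_contra hcon
  push_neg at hcon
  obtain ⟨⟨hc1, hc2⟩, hc3, hc4⟩ := hcon
  have hmem : a1 ∈ closedArc x1 y1 ∩ closedArc x2 y2 := by
    rw [← hS]; exact left_mem_closedArc _ _
  obtain ⟨ε1, hε1, hs1⟩ := exists_two_sided hmem.1 hc1 hc2
  obtain ⟨ε2, hε2, hs2⟩ := exists_two_sided hmem.2 hc3 hc4
  have hLa : arcLen a1 a2 < 1 := arcLen_lt_one _ _
  set δ := min (min ε1 ε2) (1 - arcLen a1 a2) / 2 with hδ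
  have hδ0 : 0 < δ := by
    apply div_pos _ two_pos
    exact lt_min (lt_min hε1 hε2) (by linarith)
  have hδ1 : δ < ε1 := by
    have : δ ≤ min (min ε1 ε2) (1 - arcLen a1 a2) := by
      rw [hδ]; linarith [div_le_self (le_min (le_min hε1.le hε2.le) (by linarith)) one_le_two]
    calc δ = min (min ε1 ε2) (1 - arcLen a1 a2) / 2 := hδ
      _ < min (min ε1 ε2) (1 - arcLen a1 a2) := by
          apply div_lt_self (lt_min (lt_min hε1 hε2) (by linarith)) one_lt_two
      _ ≤ ε1 := le_trans (min_le_left _ _) (min_le_left _ _)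
  have hδ2 : δ < ε2 := by
    calc δ < min (min ε1 ε2) (1 - arcLen a1 a2) := by
          apply div_lt_self (lt_min (lt_min hε1 hε2) (by linarith)) one_lt_two
      _ ≤ ε2 := le_trans (min_le_left _ _) (min_le_right _ _)
  have hδ3 : δ < 1 - arcLen a1 a2 := by
    calc δ < min (min ε1 ε2) (1 - arcLen a1 a2) := by
          apply div_lt_self (lt_min (lt_min hε1 hε2) (by linarith)) one_lt_two
      _ ≤ _ := min_le_right _ _
  have hmem2 : a1 - ((δ:ℝ):S1) ∈ closedArc a1 a2 := by
    rw [hS]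
    exact ⟨(hs1 δ hδ0 hδ1).1, (hs2 δ hδ0 hδ2).1⟩
  exact notmem_left hδ0 hδ3 hmem2

theorem end_right_mem {a1 a2 x1 y1 x2 y2 : S1} (ha : a1 ≠ a2) (h1 : x1 ≠ y1) (h2 : x2 ≠ y2)
    (hS : closedArc a1 a2 = closedArc x1 y1 ∩ closedArc x2 y2) :
    (a2 = x1 ∨ a2 = y1) ∨ (a2 = x2 ∨ a2 = y2) := by
  by_contra hcon
  push_neg at hcon
  obtain ⟨⟨hc1, hc2⟩, hc3, hc4⟩ := hcon
  have hmem : a2 ∈ closedArc x1 y1 ∩ closedArc x2 y2 := by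
    rw [← hS]; exact right_mem_closedArc _ _
  obtain ⟨ε1, hε1, hs1⟩ := exists_two_sided hmem.1 hc1 hc2
  obtain ⟨ε2, hε2, hs2⟩ := exists_two_sided hmem.2 hc3 hc4
  have hLa : arcLen a1 a2 < 1 := arcLen_lt_one _ _
  set δ := min (min ε1 ε2) (1 - arcLen a1 a2) / 2 with hδ
  have hδ0 : 0 < δ := by
    apply div_pos _ two_pos
    exact lt_min (lt_min hε1 hε2) (by linarith)
  have hδm : δ < min (min ε1 ε2) (1 - arcLen a1 a2) :=
    div_lt_self (lt_min (lt_min hε1 hε2) (by linarith)) one_lt_two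
  have hδ1 : δ < ε1 := hδm.trans_le (le_trans (min_le_left _ _) (min_le_left _ _))
  have hδ2 : δ < ε2 := hδm.trans_le (le_trans (min_le_left _ _) (min_le_right _ _))
  have hδ3 : δ < 1 - arcLen a1 a2 := hδm.trans_le (min_le_right _ _)
  have hmem2 : a2 + ((δ:ℝ):S1) ∈ closedArc a1 a2 := by
    rw [hS]
    exact ⟨(hs1 δ hδ0 hδ1).2, (hs2 δ hδ0 hδ2).2⟩
  exact notmem_right hδ0 hδ3 hmem2

theorem arc_eq_of_ends {a1 a2 x y : S1} (ha : a1 ≠ a2) (hxy : x ≠ y)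
    (hsub : closedArc a1 a2 ⊆ closedArc x y)
    (h1 : a1 = x ∨ a1 = y) (h2 : a2 = x ∨ a2 = y) :
    closedArc x y = closedArc a1 a2 := by
  rcases h1 with rfl | rfl
  · rcases h2 with rfl | rfl
    · exact absurd rfl ha
    · rfl
  · rcases h2 with rfl | rfl
    · exact absurd hsub (compl_arc_not_subset hxy)
    · exact absurd rfl ha

theorem subset_of_partition_finset {α : Type*} [TopologicalSpace α] [NormalSpace α]
    (F : Finset (Set α)) {s : Set α} (hs : IsPreconnected s) (hne : s.Nonempty)
    (hcl : ∀ K ∈ F, IsClosed K)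
    (hdisj : ∀ K ∈ F, ∀ K' ∈ F, K ≠ K' → Disjoint K K')
    (hcov : s ⊆ ⋃₀ ↑F) : ∃ K ∈ F, s ⊆ K := by
  classical
  induction F using Finset.induction_on generalizing s with
  | empty => simp at hcov; exact absurd hcov hne.ne_empty
  | @insert K F hK ih =>
    have hKcl : IsClosed K := hcl K (Finset.mem_insert_self _ _)
    have hWcl : IsClosed (⋃₀ (↑F : Set (Set α))) := by
      rw [Set.sUnion_eq_biUnion]
      exact (F.finite_toSet).isClosed_biUnion (fun K' hK' => hcl K' (Finset.mem_insert_of_mem hK'))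
    have hdKW : Disjoint K (⋃₀ (↑F : Set (Set α))) := by
      rw [Set.disjoint_sUnion_right]
      intro K' hK'
      exact hdisj K (Finset.mem_insert_self _ _) K' (Finset.mem_insert_of_mem hK')
        (fun h => hK (h ▸ hK'))
    obtain ⟨U, V, hU, hV, hKU, hWV, hUV⟩ := NormalSpace.normal _ _ hKcl hWcl hdKW
    have hcov' : s ⊆ U ∪ V := by
      intro z hz
      rcases hcov hz with ⟨T, hT, hzT⟩
      rcases Finset.mem_insert.1 (by exact_mod_cast hT) with rfl | hTF
      · exact Or.inl (hKU hzT)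
      · exact Or.inr (hWV ⟨T, hTF, hzT⟩)
    rcases hs.subset_or_subset hU hV hUV hcov' with hsU | hsV
    · refine ⟨K, Finset.mem_insert_self _ _, fun z hz => ?_⟩
      rcases hcov hz with ⟨T, hT, hzT⟩
      rcases Finset.mem_insert.1 (by exact_mod_cast hT) with rfl | hTF
      · exact hzT
      · exact absurd (hWV ⟨T, hTF, hzT⟩) (Set.disjoint_left.1 hUV (hsU hz))
    · have : s ⊆ ⋃₀ (↑F : Set (Set α)) := by
        intro z hz
        rcases hcov hz with ⟨T, hT, hzT⟩
        rcases Finset.mem_insert.1 (by exact_mod_cast hT) with rfl | hTF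
        · exact absurd (hKU hzT) (Set.disjoint_right.1 hUV (hsV hz))
        · exact ⟨T, hTF, hzT⟩
      obtain ⟨K', hK', hsK'⟩ := ih hs hne (fun K' hh => hcl K' (Finset.mem_insert_of_mem hh))
        (fun a ha b hb => hdisj a (Finset.mem_insert_of_mem ha) b (Finset.mem_insert_of_mem hb))
        this
      exact ⟨K', Finset.mem_insert_of_mem hK', hsK'⟩

theorem subset_of_partition {α : Type*} [TopologicalSpace α] [NormalSpace α]
    {s : Set α} (hs : IsPreconnected s) (hne : s.Nonempty)
    {F : Set (Set α)} (hF : F.Finite) (hcl : ∀ K ∈ F, IsClosed K)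
    (hdisj : ∀ K ∈ F, ∀ K' ∈ F, K ≠ K' → Disjoint K K')
    (hcov : s ⊆ ⋃₀ F) : ∃ K ∈ F, s ⊆ K := by
  obtain ⟨K, hK, hsK⟩ := subset_of_partition_finset hF.toFinset hs hne
    (fun K hKm => hcl K (hF.mem_toFinset.1 hKm))
    (fun a ha b hb => hdisj a (hF.mem_toFinset.1 ha) b (hF.mem_toFinset.1 hb))
    (by rwa [hF.coe_toFinset])
  exact ⟨K, hF.mem_toFinset.1 hK, hsK⟩

theorem icc_subset_closed_of_cofinite {a b : ℝ} (hab : a < b) {W : Set ℝ} (hW : IsClosed W)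
    {F : Set ℝ} (hF : F.Finite) (h : Set.Icc a b \ F ⊆ W) : Set.Icc a b ⊆ W := by
  intro t ht
  by_contra htW
  obtain ⟨ε, hε, hball⟩ := Metric.isOpen_iff.1 hW.isOpen_compl t htW
  set c := max a (t - ε/2) with hc
  set d := min b (t + ε/2) with hd
  have hcd : c < d := by
    rcases lt_or_ge t b with h' | h'
    · apply max_lt <;> [skip; skip] <;> apply lt_min <;> first | exact h' | linarith [ht.1, ht.2]
    · have htb : t = b := le_antisymm ht.2 h'
      apply max_lt <;> apply lt_min <;> linarith [ht.1, ht.2]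
  have hsub : Set.Icc c d ⊆ F := by
    intro z hz
    have hzab : z ∈ Set.Icc a b := ⟨le_trans (le_max_left _ _) hz.1, le_trans hz.2 (min_le_left _ _)⟩
    have hzball : z ∈ Metric.ball t ε := by
      rw [Metric.mem_ball, Real.dist_eq, abs_lt]
      constructor <;> [linarith [hz.1, le_max_right a (t - ε/2)]; linarith [hz.2, min_le_right b (t + ε/2)]]
    by_contra hzF
    exact hball hzball (h ⟨hzab, hzF⟩)
  exact (Set.Icc_infinite hcd) (hF.subset hsub)

theorem add_coe_inj {x : S1} {s t : ℝ} (hs : s ∈ Set.Ico (0:ℝ) 1) (ht : t ∈ Set.Ico (0:ℝ) 1)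
    (h : x + ((s:ℝ):S1) = x + ((t:ℝ):S1)) : s = t :=
  add_coe_injOn hs ht h

theorem Rect.corner_mem (r : Rect) : ((r.θ1, r.φ1) : S1 × S1) ∈ r.toSet :=
  ⟨left_mem_closedArc _ _, left_mem_closedArc _ _⟩

theorem Rect.toSet_nonempty (r : Rect) : r.toSet.Nonempty := ⟨_, r.corner_mem⟩

theorem Rect.V_finite (r : Rect) : r.V.Finite :=
  ((Set.finite_singleton r.θ2).insert r.θ1).prod ((Set.finite_singleton r.φ2).insert r.φ1)

theorem mem_V {r : Rect} {v : S1 × S1} :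
    v ∈ r.V ↔ (v.1 = r.θ1 ∨ v.1 = r.θ2) ∧ (v.2 = r.φ1 ∨ v.2 = r.φ2) := by
  simp [Rect.V]

theorem Rect.V_subset (r : Rect) : r.V ⊆ r.toSet := by
  rintro ⟨a, b⟩ hab
  rw [mem_V] at hab
  constructor
  · rcases hab.1 with h | h <;> rw [h]
    · exact left_mem_closedArc _ _
    · exact right_mem_closedArc _ _
  · rcases hab.2 with h | h <;> rw [h]
    · exact left_mem_closedArc _ _
    · exact right_mem_closedArc _ _

theorem Rect.toSet_infinite (r : Rect) : r.toSet.Infinite := by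
  have h : (fun θ => ((θ, r.φ1) : S1 × S1)) '' closedArc r.θ1 r.θ2 ⊆ r.toSet := by
    rintro p ⟨θ, hθ, rfl⟩; exact ⟨hθ, left_mem_closedArc _ _⟩
  exact Set.Infinite.mono h
    ((infinite_closedArc r.hθ).image (fun a _ b _ hab => congrArg Prod.fst hab))

theorem Rect.inter_eq (r1 r2 : Rect) :
    r1.toSet ∩ r2.toSet =
      (closedArc r1.θ1 r1.θ2 ∩ closedArc r2.θ1 r2.θ2) ×ˢ
        (closedArc r1.φ1 r1.φ2 ∩ closedArc r2.φ1 r2.φ2) :=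
  Set.prod_inter_prod

theorem Rect.toSet_inj {r r' : Rect} (h : r.toSet = r'.toSet) : r = r' := by
  have hne : (closedArc r.θ1 r.θ2 ×ˢ closedArc r.φ1 r.φ2).Nonempty := r.toSet_nonempty
  have := (Set.prod_eq_prod_iff_of_nonempty hne).1 h
  obtain ⟨hθ, hφ⟩ := this
  obtain ⟨h1, h2⟩ := closedArc_inj r.hθ r'.hθ hθ
  obtain ⟨h3, h4⟩ := closedArc_inj r.hφ r'.hφ hφ
  cases r; cases r'
  simp only [Rect.mk.injEq]
  exact ⟨h1, h2, h3, h4⟩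

theorem crossing_auxA {c1 d1 c2 d2 e1 f1 e2 f2 a1 a2 b1 b2 : S1}
    (hcd1 : c1 ≠ d1) (hef2 : e2 ≠ f2)
    (ha : a1 ≠ a2) (hb : b1 ≠ b2)
    (hSθ : closedArc a1 a2 = closedArc c1 d1 ∩ closedArc c2 d2)
    (hSφ : closedArc b1 b2 = closedArc e1 f1 ∩ closedArc e2 f2)
    (hb1 : (b1 = e1 ∨ b1 = f1) ∨ (b1 = e2 ∨ b1 = f2))
    (hb2 : (b2 = e1 ∨ b2 = f1) ∨ (b2 = e2 ∨ b2 = f2))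
    (ha2 : (a2 = c1 ∨ a2 = d1) ∨ (a2 = c2 ∨ a2 = d2))
    (hcorn1 : ∀ a b : S1, (a = a1 ∨ a = a2) → (b = b1 ∨ b = b2) →
      ¬((a = c1 ∨ a = d1) ∧ (b = e1 ∨ b = f1)))
    (hcorn2 : ∀ a b : S1, (a = a1 ∨ a = a2) → (b = b1 ∨ b = b2) →
      ¬((a = c2 ∨ a = d2) ∧ (b = e2 ∨ b = f2)))
    (ha1 : a1 = c1 ∨ a1 = d1) :
    closedArc c1 d1 ⊆ closedArc c2 d2 ∧ closedArc e2 f2 ⊆ closedArc e1 f1 := by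
  have hb1' : b1 = e2 ∨ b1 = f2 :=
    hb1.resolve_left (fun h => hcorn1 a1 b1 (Or.inl rfl) (Or.inl rfl) ⟨ha1, h⟩)
  have hb2' : b2 = e2 ∨ b2 = f2 :=
    hb2.resolve_left (fun h => hcorn1 a1 b2 (Or.inl rfl) (Or.inr rfl) ⟨ha1, h⟩)
  have hφeq : closedArc e2 f2 = closedArc b1 b2 :=
    arc_eq_of_ends hb hef2 (hSφ ▸ Set.inter_subset_right) hb1' hb2'
  have ha2' : a2 = c1 ∨ a2 = d1 :=
    ha2.resolve_right (fun h => hcorn2 a2 b1 (Or.inr rfl) (Or.inl rfl) ⟨h, hb1'⟩)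
  have hθeq : closedArc c1 d1 = closedArc a1 a2 :=
    arc_eq_of_ends ha hcd1 (hSθ ▸ Set.inter_subset_left) ha1 ha2'
  constructor
  · rw [hθeq, hSθ]; exact Set.inter_subset_right
  · rw [hφeq, hSφ]; exact Set.inter_subset_left

theorem crossing {r1 r2 s : Rect}
    (hinter : r1.toSet ∩ r2.toSet = s.toSet)
    (hdisj : Disjoint s.toSet (r1.V ∪ r2.V)) :
    (closedArc r1.θ1 r1.θ2 ⊆ closedArc r2.θ1 r2.θ2 ∧
      closedArc r2.φ1 r2.φ2 ⊆ closedArc r1.φ1 r1.φ2) ∨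
    (closedArc r2.θ1 r2.θ2 ⊆ closedArc r1.θ1 r1.θ2 ∧
      closedArc r1.φ1 r1.φ2 ⊆ closedArc r2.φ1 r2.φ2) := by
  have hprod : (closedArc r1.θ1 r1.θ2 ∩ closedArc r2.θ1 r2.θ2) ×ˢ
      (closedArc r1.φ1 r1.φ2 ∩ closedArc r2.φ1 r2.φ2) =
      closedArc s.θ1 s.θ2 ×ˢ closedArc s.φ1 s.φ2 := by
    rw [← Rect.inter_eq, hinter]; rfl
  have hne : ((closedArc r1.θ1 r1.θ2 ∩ closedArc r2.θ1 r2.θ2) ×ˢ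
      (closedArc r1.φ1 r1.φ2 ∩ closedArc r2.φ1 r2.φ2)).Nonempty := by
    rw [hprod]; exact s.toSet_nonempty
  obtain ⟨hθeq, hφeq⟩ := (Set.prod_eq_prod_iff_of_nonempty hne).1 hprod
  have hcorn : ∀ a b : S1, (a = s.θ1 ∨ a = s.θ2) → (b = s.φ1 ∨ b = s.φ2) →
      ((a, b) : S1 × S1) ∉ r1.V ∧ ((a, b) : S1 × S1) ∉ r2.V := by
    intro a b hab hbb
    have hmem : ((a, b) : S1 × S1) ∈ s.toSet := by
      constructor
      · rcases hab with h | h <;> rw [h]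
        · exact left_mem_closedArc _ _
        · exact right_mem_closedArc _ _
      · rcases hbb with h | h <;> rw [h]
        · exact left_mem_closedArc _ _
        · exact right_mem_closedArc _ _
    constructor
    · exact fun hV => Set.disjoint_left.1 hdisj hmem (Or.inl hV)
    · exact fun hV => Set.disjoint_left.1 hdisj hmem (Or.inr hV)
  have hcorn1 : ∀ a b : S1, (a = s.θ1 ∨ a = s.θ2) → (b = s.φ1 ∨ b = s.φ2) →
      ¬((a = r1.θ1 ∨ a = r1.θ2) ∧ (b = r1.φ1 ∨ b = r1.φ2)) := by
    intro a b h1 h2 hc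
    exact (hcorn a b h1 h2).1 (mem_V.2 hc)
  have hcorn2 : ∀ a b : S1, (a = s.θ1 ∨ a = s.θ2) → (b = s.φ1 ∨ b = s.φ2) →
      ¬((a = r2.θ1 ∨ a = r2.θ2) ∧ (b = r2.φ1 ∨ b = r2.φ2)) := by
    intro a b h1 h2 hc
    exact (hcorn a b h1 h2).2 (mem_V.2 hc)
  have ha1 := end_left_mem s.hθ r1.hθ r2.hθ hθeq.symm
  have ha2 := end_right_mem s.hθ r1.hθ r2.hθ hθeq.symm
  have hb1 := end_left_mem s.hφ r1.hφ r2.hφ hφeq.symm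
  have hb2 := end_right_mem s.hφ r1.hφ r2.hφ hφeq.symm
  rcases ha1 with ha1 | ha1
  · exact Or.inl (crossing_auxA r1.hθ r2.hφ s.hθ s.hφ hθeq.symm hφeq.symm hb1 hb2 ha2
      hcorn1 hcorn2 ha1)
  · refine Or.inr (crossing_auxA r2.hθ r1.hφ s.hθ s.hφ ?_ ?_ hb1.symm hb2.symm ha2.symm
      (fun a b h1 h2 => hcorn2 a b h1 h2) (fun a b h1 h2 => hcorn1 a b h1 h2) ha1)
    · rw [hθeq.symm, Set.inter_comm]
    · rw [hφeq.symm, Set.inter_comm]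

theorem compat_cross {r1 r2 : Rect} (h : Compatible r1 r2)
    (hinf : (r1.toSet ∩ r2.toSet).Infinite) :
    (closedArc r1.θ1 r1.θ2 ⊆ closedArc r2.θ1 r2.θ2 ∧
      closedArc r2.φ1 r2.φ2 ⊆ closedArc r1.φ1 r1.φ2) ∨
    (closedArc r2.θ1 r2.θ2 ⊆ closedArc r1.θ1 r1.θ2 ∧
      closedArc r1.φ1 r1.φ2 ⊆ closedArc r2.φ1 r2.φ2) := by
  rcases h with h | ⟨h, _⟩ | ⟨s, hs, hd⟩
  · rw [h] at hinf
    exact absurd rfl hinf.nonempty.ne_empty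
  · exact absurd (r1.V_finite.subset h) hinf
  · exact crossing hs hd

theorem inter_infinite_of_segment {r1 r2 : Rect} {x y : S1}
    (hx1 : x ∈ closedArc r1.θ1 r1.θ2) (hx1a : x ≠ r1.θ1) (hx1b : x ≠ r1.θ2)
    (hx2 : x ∈ closedArc r2.θ1 r2.θ2) (hx2a : x ≠ r2.θ1) (hx2b : x ≠ r2.θ2)
    (hy : y ∈ closedArc r1.φ1 r1.φ2 ∩ closedArc r2.φ1 r2.φ2) :
    (r1.toSet ∩ r2.toSet).Infinite := by
  obtain ⟨ε1, hε1, h1⟩ := exists_two_sided hx1 hx1a hx1b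
  obtain ⟨ε2, hε2, h2⟩ := exists_two_sided hx2 hx2a hx2b
  set ε := min (min ε1 ε2) 1 with hε
  have hε0 : 0 < ε := lt_min (lt_min hε1 hε2) one_pos
  have hsub : (fun δ : ℝ => ((x + ((δ:ℝ):S1), y) : S1 × S1)) '' Set.Ioo 0 ε ⊆
      r1.toSet ∩ r2.toSet := by
    rintro p ⟨δ, ⟨hδ0, hδε⟩, rfl⟩
    have hδ1 : δ < ε1 := hδε.trans_le (le_trans (min_le_left _ _) (min_le_left _ _))
    have hδ2 : δ < ε2 := hδε.trans_le (le_trans (min_le_left _ _) (min_le_right _ _))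
    exact ⟨⟨(h1 δ hδ0 hδ1).2, hy.1⟩, ⟨(h2 δ hδ0 hδ2).2, hy.2⟩⟩
  refine Set.Infinite.mono hsub (Set.Infinite.image ?_ (Set.Ioo_infinite hε0))
  intro a ha b hb hab
  have h1' : x + ((a:ℝ):S1) = x + ((b:ℝ):S1) := congrArg Prod.fst hab
  have hm : ∀ c : ℝ, c ∈ Set.Ioo (0:ℝ) ε → c ∈ Set.Ico (0:ℝ) 1 := by
    intro c hc
    exact ⟨hc.1.le, hc.2.trans_le (min_le_right _ _)⟩
  exact add_coe_inj (hm a ha) (hm b hb) h1'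

theorem inter_infinite_of_phi {r1 r2 : Rect} {x : S1}
    (hx : x ∈ closedArc r1.θ1 r1.θ2 ∩ closedArc r2.θ1 r2.θ2)
    (hφ : (closedArc r1.φ1 r1.φ2 ∩ closedArc r2.φ1 r2.φ2).Infinite) :
    (r1.toSet ∩ r2.toSet).Infinite := by
  have hsub : (fun y => ((x, y) : S1 × S1)) ''
      (closedArc r1.φ1 r1.φ2 ∩ closedArc r2.φ1 r2.φ2) ⊆ r1.toSet ∩ r2.toSet := by
    rintro p ⟨y, hy, rfl⟩
    exact ⟨⟨hx.1, hy.1⟩, ⟨hx.2, hy.2⟩⟩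
  exact Set.Infinite.mono hsub (hφ.image (fun a _ b _ hab => congrArg Prod.snd hab))

theorem slice_covered (P : RectDiagram) (ρ : Rect)
    (hU : ρ.toSet ⊆ ⋃ r ∈ P.rects, r.toSet)
    {x : S1} (hx : x ∈ closedArc ρ.θ1 ρ.θ2)
    (hgen : ∀ r ∈ P.rects, x ≠ r.θ1 ∧ x ≠ r.θ2) :
    ∃ r0 ∈ P.rects, x ∈ closedArc r0.θ1 r0.θ2 ∧
      closedArc ρ.φ1 ρ.φ2 ⊆ closedArc r0.φ1 r0.φ2 := by
  classical
  set Y := closedArc ρ.φ1 ρ.φ2 with hYdef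
  set 𝒟 : Set (Set S1) :=
    {D | ∃ r ∈ P.rects, x ∈ closedArc r.θ1 r.θ2 ∧ D = closedArc r.φ1 r.φ2} with h𝒟def
  have h𝒟fin : 𝒟.Finite := by
    apply Set.Finite.subset (P.finite.image (fun r => closedArc r.φ1 r.φ2))
    rintro D ⟨r, hr, _, hD⟩
    exact ⟨r, hr, hD.symm⟩
  have h𝒟closed : ∀ D ∈ 𝒟, IsClosed D := by
    rintro D ⟨r, hr, hxr, rfl⟩
    exact isClosed_closedArc _ _
  have hcompar : ∀ D ∈ 𝒟, ∀ D' ∈ 𝒟, (D ∩ D').Nonempty → D ⊆ D' ∨ D' ⊆ D := by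
    rintro D ⟨r, hr, hxr, rfl⟩ D' ⟨r', hr', hxr', rfl⟩ ⟨y, hy⟩
    by_cases hrr : r = r'
    · subst hrr; exact Or.inl subset_rfl
    · have hinf := inter_infinite_of_segment hxr (hgen r hr).1 (hgen r hr).2
        hxr' (hgen r' hr').1 (hgen r' hr').2 hy
      rcases compat_cross (P.compat r hr r' hr' hrr) hinf with ⟨_, h⟩ | ⟨_, h⟩
      · exact Or.inr h
      · exact Or.inl h
  have hmaxex : ∀ D ∈ 𝒟, ∃ M ∈ 𝒟, D ⊆ M ∧ ∀ D' ∈ 𝒟, M ⊆ D' → D' = M := by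
    intro D hD
    obtain ⟨M, hM, hmax⟩ := Set.Finite.exists_maximalFor id {E ∈ 𝒟 | D ⊆ E}
      (h𝒟fin.subset (Set.sep_subset _ _)) ⟨D, hD, subset_rfl⟩
    exact ⟨M, hM.1, hM.2, fun D' hD' hMD' => (hmax ⟨hD', hM.2.trans hMD'⟩ hMD').antisymm hMD'⟩
  set ℳ := {M ∈ 𝒟 | ∀ D' ∈ 𝒟, M ⊆ D' → D' = M} with hℳdef
  have hℳdisj : ∀ M ∈ ℳ, ∀ M' ∈ ℳ, M ≠ M' → Disjoint M M' := by
    intro M hM M' hM' hne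
    rw [Set.disjoint_iff_inter_eq_empty]
    by_contra hne'
    rcases hcompar M hM.1 M' hM'.1 (Set.nonempty_iff_ne_empty.2 hne') with h | h
    · exact hne (hM.2 M' hM'.1 h).symm
    · exact hne (hM'.2 M hM.1 h)
  set LY := arcLen ρ.φ1 ρ.φ2 with hLY
  set g : ℝ → S1 := fun t => ρ.φ1 + ((t:ℝ):S1) with hgdef
  have hgcont : Continuous g := continuous_const.add (AddCircle.continuous_mk' 1)
  set F : Set (Set ℝ) := (fun M => g ⁻¹' M ∩ Set.Icc 0 LY) '' ℳ with hFdef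
  have hpart := subset_of_partition (s := Set.Icc (0:ℝ) LY) isPreconnected_Icc
    ⟨0, le_refl 0, arcLen_nonneg _ _⟩
    (F := F) (((h𝒟fin.subset (Set.sep_subset _ _)).image _))
    (by
      rintro K ⟨M, hM, rfl⟩
      exact ((h𝒟closed M hM.1).preimage hgcont).inter isClosed_Icc)
    (by
      rintro K ⟨M, hM, rfl⟩ K' ⟨M', hM', rfl⟩ hKK'
      have hMM' : M ≠ M' := by
        intro h; subst h; exact hKK' rfl
      exact ((hℳdisj M hM M' hM' hMM').preimage g).mono
        Set.inter_subset_left Set.inter_subset_left)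
    (by
      intro t ht
      have hgtY : g t ∈ Y := mem_closedArc_coe ht.1 ht.2
      have hmemU : ((x, g t) : S1 × S1) ∈ ⋃ r ∈ P.rects, r.toSet := hU ⟨hx, hgtY⟩
      rw [Set.mem_iUnion₂] at hmemU
      obtain ⟨r, hr, hmem⟩ := hmemU
      have hD : closedArc r.φ1 r.φ2 ∈ 𝒟 := ⟨r, hr, hmem.1, rfl⟩
      obtain ⟨M, hM, hsub, hmax'⟩ := hmaxex _ hD
      exact ⟨g ⁻¹' M ∩ Set.Icc 0 LY, ⟨M, ⟨hM, hmax'⟩, rfl⟩, hsub hmem.2, ht⟩)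
  obtain ⟨K, ⟨M, hM, rfl⟩, hAK⟩ := hpart
  have hYM : Y ⊆ M := by
    rw [hYdef, closedArc_eq_image]
    rintro y ⟨t, ht, rfl⟩
    exact (hAK ht).1
  obtain ⟨r0, hr0, hxr0, hDr0⟩ := hM.1
  exact ⟨r0, hr0, hxr0, hDr0 ▸ hYM⟩

theorem exists_superset (P : RectDiagram) (ρ : Rect)
    (hU : ρ.toSet ⊆ ⋃ r ∈ P.rects, r.toSet) :
    ∃ r0 ∈ P.rects, ρ.toSet ⊆ r0.toSet := by
  classical
  set Y := closedArc ρ.φ1 ρ.φ2 with hYdef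
  have hYinf : Y.Infinite := infinite_closedArc ρ.hφ
  set 𝒞 : Set (Set S1) :=
    {C | ∃ r ∈ P.rects, C = closedArc r.θ1 r.θ2 ∧ Y ⊆ closedArc r.φ1 r.φ2} with h𝒞def
  have h𝒞fin : 𝒞.Finite := by
    apply Set.Finite.subset (P.finite.image (fun r => closedArc r.θ1 r.θ2))
    rintro C ⟨r, hr, hC, _⟩
    exact ⟨r, hr, hC.symm⟩
  have h𝒞closed : ∀ C ∈ 𝒞, IsClosed C := by
    rintro C ⟨r, hr, rfl, _⟩
    exact isClosed_closedArc _ _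
  have hcompar : ∀ C ∈ 𝒞, ∀ C' ∈ 𝒞, (C ∩ C').Nonempty → C ⊆ C' ∨ C' ⊆ C := by
    rintro C ⟨r, hr, rfl, hYr⟩ C' ⟨r', hr', rfl, hYr'⟩ ⟨x0, hx0⟩
    by_cases hrr : r = r'
    · subst hrr; exact Or.inl subset_rfl
    · have hinfφ : (closedArc r.φ1 r.φ2 ∩ closedArc r'.φ1 r'.φ2).Infinite :=
        hYinf.mono (Set.subset_inter hYr hYr')
      rcases compat_cross (P.compat r hr r' hr' hrr)
        (inter_infinite_of_phi hx0 hinfφ) with ⟨h, _⟩ | ⟨h, _⟩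
      · exact Or.inl h
      · exact Or.inr h
  have hmaxex : ∀ C ∈ 𝒞, ∃ M ∈ 𝒞, C ⊆ M ∧ ∀ C' ∈ 𝒞, M ⊆ C' → C' = M := by
    intro C hC
    obtain ⟨M, hM, hmax⟩ := Set.Finite.exists_maximalFor id {E ∈ 𝒞 | C ⊆ E}
      (h𝒞fin.subset (Set.sep_subset _ _)) ⟨C, hC, subset_rfl⟩
    exact ⟨M, hM.1, hM.2, fun C' hC' hMC' => (hmax ⟨hC', hM.2.trans hMC'⟩ hMC').antisymm hMC'⟩
  set ℳ := {M ∈ 𝒞 | ∀ C' ∈ 𝒞, M ⊆ C' → C' = M} with hℳdef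
  have hℳdisj : ∀ M ∈ ℳ, ∀ M' ∈ ℳ, M ≠ M' → Disjoint M M' := by
    intro M hM M' hM' hne
    rw [Set.disjoint_iff_inter_eq_empty]
    by_contra hne'
    rcases hcompar M hM.1 M' hM'.1 (Set.nonempty_iff_ne_empty.2 hne') with h | h
    · exact hne (hM.2 M' hM'.1 h).symm
    · exact hne (hM'.2 M hM.1 h)
  set LX := arcLen ρ.θ1 ρ.θ2 with hLX
  have hLX1 : LX < 1 := arcLen_lt_one _ _
  have hLX0 : 0 < LX := arcLen_pos ρ.hθ
  set g : ℝ → S1 := fun t => ρ.θ1 + ((t:ℝ):S1) with hgdef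
  have hgcont : Continuous g := continuous_const.add (AddCircle.continuous_mk' 1)
  have hginj : ∀ s ∈ Set.Icc (0:ℝ) LX, ∀ t ∈ Set.Icc (0:ℝ) LX, g s = g t → s = t := by
    intro s hs t ht h
    exact add_coe_inj ⟨hs.1, hs.2.trans_lt hLX1⟩ ⟨ht.1, ht.2.trans_lt hLX1⟩ h
  set F : Set (Set ℝ) := (fun M => g ⁻¹' M ∩ Set.Icc 0 LX) '' ℳ with hFdef
  have hFfin : F.Finite := (h𝒞fin.subset (Set.sep_subset _ _)).image _
  have hFclosed : ∀ K ∈ F, IsClosed K := by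
    rintro K ⟨M, hM, rfl⟩
    exact ((h𝒞closed M hM.1).preimage hgcont).inter isClosed_Icc
  have hWclosed : IsClosed (⋃₀ F) := by
    rw [Set.sUnion_eq_biUnion]
    exact hFfin.isClosed_biUnion hFclosed
  set Fbad : Set ℝ := {t | t ∈ Set.Icc (0:ℝ) LX ∧ ∃ r ∈ P.rects, g t = r.θ1 ∨ g t = r.θ2}
    with hFbaddef
  have hFbadfin : Fbad.Finite := by
    have hsub : Fbad ⊆ ⋃ r ∈ P.rects,
        ({t | t ∈ Set.Icc (0:ℝ) LX ∧ g t = r.θ1} ∪ {t | t ∈ Set.Icc (0:ℝ) LX ∧ g t = r.θ2}) := by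
      rintro t ⟨ht, r, hr, h | h⟩
      · exact Set.mem_biUnion hr (Or.inl ⟨ht, h⟩)
      · exact Set.mem_biUnion hr (Or.inr ⟨ht, h⟩)
    apply Set.Finite.subset _ hsub
    apply P.finite.biUnion
    intro r _
    apply Set.Finite.union
    · apply Set.Subsingleton.finite
      intro a ha b hb
      exact hginj a ha.1 b hb.1 (ha.2.trans hb.2.symm)
    · apply Set.Subsingleton.finite
      intro a ha b hb
      exact hginj a ha.1 b hb.1 (ha.2.trans hb.2.symm)
  have hcof : Set.Icc (0:ℝ) LX \ Fbad ⊆ ⋃₀ F := by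
    intro t ht
    have htI : t ∈ Set.Icc (0:ℝ) LX := ht.1
    have hgen : ∀ r ∈ P.rects, g t ≠ r.θ1 ∧ g t ≠ r.θ2 := by
      intro r hr
      constructor <;> intro h <;> exact ht.2 ⟨htI, r, hr, by tauto⟩
    have hxX : g t ∈ closedArc ρ.θ1 ρ.θ2 := mem_closedArc_coe htI.1 htI.2
    obtain ⟨r0, hr0, hxr0, hYr0⟩ := slice_covered P ρ hU hxX hgen
    have hC : closedArc r0.θ1 r0.θ2 ∈ 𝒞 := ⟨r0, hr0, rfl, hYr0⟩
    obtain ⟨M, hM, hsub, hmax'⟩ := hmaxex _ hC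
    exact ⟨g ⁻¹' M ∩ Set.Icc 0 LX, ⟨M, ⟨hM, hmax'⟩, rfl⟩, hsub hxr0, htI⟩
  have hWall : Set.Icc (0:ℝ) LX ⊆ ⋃₀ F :=
    icc_subset_closed_of_cofinite hLX0 hWclosed hFbadfin hcof
  obtain ⟨K, ⟨M, hM, rfl⟩, hAK⟩ := subset_of_partition (s := Set.Icc (0:ℝ) LX)
    isPreconnected_Icc ⟨0, le_refl 0, hLX0.le⟩ hFfin hFclosed
    (by
      rintro K ⟨M, hM, rfl⟩ K' ⟨M', hM', rfl⟩ hKK'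
      have hMM' : M ≠ M' := fun h => hKK' (by rw [h])
      exact ((hℳdisj M hM M' hM' hMM').preimage g).mono
        Set.inter_subset_left Set.inter_subset_left)
    hWall
  have hXM : closedArc ρ.θ1 ρ.θ2 ⊆ M := by
    rw [closedArc_eq_image]
    rintro z ⟨t, ht, rfl⟩
    exact (hAK ht).1
  obtain ⟨r0, hr0, hMeq, hYr0⟩ := hM.1
  refine ⟨r0, hr0, ?_⟩
  rw [Rect.toSet, Rect.toSet]
  exact Set.prod_mono (hMeq ▸ hXM) hYr0

theorem eq_of_mem_subset {P : RectDiagram} {r r0 : Rect} (hr : r ∈ P.rects)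
    (hr0 : r0 ∈ P.rects) (hsub : r.toSet ⊆ r0.toSet) : r = r0 := by
  by_contra hne
  have hinter : r.toSet ∩ r0.toSet = r.toSet := Set.inter_eq_left.2 hsub
  rcases P.compat r hr r0 hr0 hne with h | ⟨h, _⟩ | ⟨s, hs, hd⟩
  · rw [hinter] at h
    exact r.toSet_nonempty.ne_empty h
  · rw [hinter] at h
    exact r.toSet_infinite (r.V_finite.subset h)
  · rw [hinter] at hs
    have hv : ((r.θ1, r.φ1) : S1 × S1) ∈ s.toSet := hs ▸ r.corner_mem
    have hV : ((r.θ1, r.φ1) : S1 × S1) ∈ r.V :=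
      mem_V.2 ⟨Or.inl rfl, Or.inl rfl⟩
    exact Set.disjoint_left.1 hd hv (Or.inl hV)

theorem diagram_eq_maximal_rects' (P : RectDiagram) (r : Rect) :
    r ∈ P.rects ↔
      (r.toSet ⊆ (⋃ r' ∈ P.rects, r'.toSet) ∧
       ∀ r' : Rect, r.toSet ⊆ r'.toSet → r'.toSet ⊆ (⋃ r'' ∈ P.rects, r''.toSet) →
         r'.toSet = r.toSet) := by
  constructor
  · intro hr
    refine ⟨Set.subset_iUnion₂ (s := fun r' _ => Rect.toSet r') r hr, ?_⟩
    intro r' hsub hsubU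
    obtain ⟨r0, hr0, hsub0⟩ := exists_superset P r' hsubU
    have heq : r = r0 := eq_of_mem_subset hr hr0 (hsub.trans hsub0)
    subst heq
    exact hsub0.antisymm hsub
  · rintro ⟨hsubU, hmax⟩
    obtain ⟨r0, hr0, hsub0⟩ := exists_superset P r hsubU
    have heq := hmax r0 hsub0 (Set.subset_iUnion₂ (s := fun r' _ => Rect.toSet r') r0 hr0)
    have : r0 = r := Rect.toSet_inj heq
    exact this ▸ hr0

/-- a rectangular diagram of a surface is exactly the set of maximal
rectangles contained in the union of its rectangles. -/
theorem diagram_eq_maximal_rects (P : RectDiagram) (r : Rect) :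
    r ∈ P.rects ↔
      (r.toSet ⊆ (⋃ r' ∈ P.rects, r'.toSet) ∧
       ∀ r' : Rect, r.toSet ⊆ r'.toSet → r'.toSet ⊆ (⋃ r'' ∈ P.rects, r''.toSet) →
         r'.toSet = r.toSet) := by
  exact diagram_eq_maximal_rects' P r

end RectDiag
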